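/- For any nonnegative integers a, b, the word 0^a 1^2 0^b is Ulam if and only if a + b is odd. -/

import Mathlib

/-- Ulam words with fuel bounding the recursion depth (fuel ≥ length suffices). -/
def UlamN : ℕ → List Bool → Prop
  | 0, _ => False
  | n + 1, w =>
    w = [false] ∨ w = [true] ∨
      ∃! p : List Bool × List Bool,
        p.1 ≠ [] ∧ p.2 ≠ [] ∧ UlamN n p.1 ∧ UlamN n p.2 ∧ p.1 ≠ p.2 ∧ p.1 ++ p.2 = w

/-- A word over {0,1} (`false` = 0, `true` = 1) is Ulam. -/
def IsUlam (w : List Bool) : Prop := UlamN w.length w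

/-- The integer whose binary representation (most significant digit first) is `w`. -/
def binVal (w : List Bool) : ℕ := w.foldl (fun acc b => 2 * acc + b.toNat) 0


lemma cond_iff (n : ℕ) (w : List Bool) (hw : w.length ≤ n + 1)
    (IH : ∀ u : List Bool, u.length ≤ n → (UlamN n u ↔ IsUlam u))
    (p : List Bool × List Bool) :
    (p.1 ≠ [] ∧ p.2 ≠ [] ∧ UlamN n p.1 ∧ UlamN n p.2 ∧ p.1 ≠ p.2 ∧ p.1 ++ p.2 = w) ↔
    (p.1 ≠ [] ∧ p.2 ≠ [] ∧ IsUlam p.1 ∧ IsUlam p.2 ∧ p.1 ≠ p.2 ∧ p.1 ++ p.2 = w) := by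
  have key : ∀ q : List Bool × List Bool, q.1 ≠ [] → q.2 ≠ [] → q.1 ++ q.2 = w →
      q.1.length ≤ n ∧ q.2.length ≤ n := by
    intro q hq1 hq2 hq6
    have hl : q.1.length + q.2.length = w.length := by
      have := congrArg List.length hq6; simpa using this
    have l1 : 1 ≤ q.1.length := List.length_pos_iff.mpr hq1
    have l2 : 1 ≤ q.2.length := List.length_pos_iff.mpr hq2
    omega
  constructor
  · rintro ⟨h1, h2, h3, h4, h5, h6⟩
    obtain ⟨k1, k2⟩ := key p h1 h2 h6
    exact ⟨h1, h2, (IH _ k1).mp h3, (IH _ k2).mp h4, h5, h6⟩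
  · rintro ⟨h1, h2, h3, h4, h5, h6⟩
    obtain ⟨k1, k2⟩ := key p h1 h2 h6
    exact ⟨h1, h2, (IH _ k1).mpr h3, (IH _ k2).mpr h4, h5, h6⟩

lemma ulamN_iff_isUlam : ∀ n : ℕ, ∀ w : List Bool, w.length ≤ n → (UlamN n w ↔ IsUlam w) := by
  intro n
  induction n using Nat.strong_induction_on with
  | _ n IH =>
    intro w hw
    match n, w with
    | 0, w =>
      have : w = [] := List.eq_nil_of_length_eq_zero (Nat.le_zero.mp hw)
      subst this; rfl
    | m + 1, [] =>
      simp only [UlamN, IsUlam, List.length_nil]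
      constructor
      · rintro (h | h | ⟨p, ⟨h1, h2, h3, h4, h5, h6⟩, _⟩)
        · exact absurd h (by simp)
        · exact absurd h (by simp)
        · exact h1 (List.append_eq_nil_iff.mp h6).1
      · exact fun h => h.elim
    | m + 1, x :: xs =>
      have e1 : ∀ u : List Bool, u.length ≤ m → (UlamN m u ↔ IsUlam u) :=
        IH m (Nat.lt_succ_self m)
      have e2 : ∀ u : List Bool, u.length ≤ xs.length → (UlamN xs.length u ↔ IsUlam u) :=
        IH xs.length (by simp at hw; omega)
      have hw2 : (x :: xs).length ≤ xs.length + 1 := by simp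
      show UlamN (m + 1) (x :: xs) ↔ UlamN ((x :: xs).length) (x :: xs)
      rw [List.length_cons]
      show _ ↔ UlamN (xs.length + 1) (x :: xs)
      simp only [UlamN]
      refine or_congr Iff.rfl (or_congr Iff.rfl (existsUnique_congr fun p => ?_))
      exact (cond_iff m _ hw e1 p).trans (cond_iff xs.length _ hw2 e2 p).symm

lemma isUlam_iff (w : List Bool) : IsUlam w ↔
    (w = [false] ∨ w = [true] ∨
      ∃! p : List Bool × List Bool,
        p.1 ≠ [] ∧ p.2 ≠ [] ∧ IsUlam p.1 ∧ IsUlam p.2 ∧ p.1 ≠ p.2 ∧ p.1 ++ p.2 = w) := by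
  rcases w with _ | ⟨x, xs⟩
  · simp only [IsUlam, List.length_nil]
    constructor
    · exact fun h => h.elim
    · rintro (h | h | ⟨p, ⟨h1, h2, h3, h4, h5, h6⟩, _⟩)
      · exact absurd h (by simp)
      · exact absurd h (by simp)
      · exact h1 (List.append_eq_nil_iff.mp h6).1
  · have e2 : ∀ u : List Bool, u.length ≤ xs.length → (UlamN xs.length u ↔ IsUlam u) :=
      ulamN_iff_isUlam xs.length
    show UlamN ((x :: xs).length) (x :: xs) ↔ _
    rw [List.length_cons]
    show UlamN (xs.length + 1) (x :: xs) ↔ _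
    simp only [UlamN]
    refine or_congr Iff.rfl (or_congr Iff.rfl (existsUnique_congr fun p => ?_))
    exact cond_iff xs.length _ (by simp) e2 p

lemma take_rep (i a : ℕ) (l : List Bool) (h : i ≤ a) :
    (List.replicate a false ++ l).take i = List.replicate i false := by
  rw [List.take_append_of_le_length (by simpa using h), List.take_replicate]
  simp [Nat.min_eq_left h]

lemma drop_rep (i a : ℕ) (l : List Bool) (h : i ≤ a) :
    (List.replicate a false ++ l).drop i = List.replicate (a - i) false ++ l := by
  rw [List.drop_append_of_le_length (by simpa using h), List.drop_replicate]

lemma take_rep' (k a : ℕ) (l : List Bool) :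
    (List.replicate a false ++ l).take (a + k) = List.replicate a false ++ l.take k := by
  rw [List.take_append]; simp

lemma drop_rep' (k a : ℕ) (l : List Bool) :
    (List.replicate a false ++ l).drop (a + k) = l.drop k := by
  rw [List.drop_append]; simp

lemma ulam_false : IsUlam [false] := by
  show UlamN 1 [false]; exact Or.inl rfl

lemma ulam_true : IsUlam [true] := by
  show UlamN 1 [true]; exact Or.inr (Or.inl rfl)

lemma ulam_zeros : ∀ k : ℕ, IsUlam (List.replicate k false) ↔ k = 1 := by
  intro k
  induction k using Nat.strong_induction_on with
  | _ k IH =>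
    match k with
    | 0 =>
      show UlamN 0 [] ↔ 0 = 1
      exact iff_of_false (fun h => h) (by omega)
    | 1 => simpa using ulam_false
    | m + 2 =>
      constructor
      · intro h
        rw [isUlam_iff] at h
        rcases h with h | h | ⟨p, ⟨h1, h2, h3, h4, h5, h6⟩, _⟩
        · exact absurd (congrArg List.length h) (by simp)
        · exact absurd (congrArg List.length h) (by simp)
        · exfalso
          have hall : ∀ x ∈ p.1 ++ p.2, x = false := by
            rw [h6]; intro x hx; exact (List.eq_replicate_iff.mp rfl).2 x hx
          have hp1 : p.1 = List.replicate p.1.length false :=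
            List.eq_replicate_iff.mpr ⟨rfl, fun x hx => hall x (List.mem_append_left _ hx)⟩
          have hp2 : p.2 = List.replicate p.2.length false :=
            List.eq_replicate_iff.mpr ⟨rfl, fun x hx => hall x (List.mem_append_right _ hx)⟩
          have hl : p.1.length + p.2.length = m + 2 := by
            have := congrArg List.length h6; simpa using this
          have l1 : 1 ≤ p.1.length := List.length_pos_iff.mpr h1
          have l2 : 1 ≤ p.2.length := List.length_pos_iff.mpr h2
          have e1 : p.1.length = 1 := (IH p.1.length (by omega)).mp (by rwa [← hp1])
          have e2 : p.2.length = 1 := (IH p.2.length (by omega)).mp (by rwa [← hp2])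
          apply h5
          rw [hp1, hp2, e1, e2]
      · omega

lemma split_take (u v w : List Bool) (h : u ++ v = w) :
    u = w.take u.length ∧ v = w.drop u.length := by
  subst h; rw [List.take_left, List.drop_left]; exact ⟨rfl, rfl⟩

lemma ulam_left : ∀ a : ℕ, IsUlam (List.replicate a false ++ [true]) := by
  intro a
  induction a with
  | zero => simpa using ulam_true
  | succ a IH =>
    rw [isUlam_iff]
    refine Or.inr (Or.inr ⟨([false], List.replicate a false ++ [true]), ⟨by simp, by simp,
      ulam_false, IH, ?_, ?_⟩, ?_⟩)
    · intro h
      have := congrArg (true ∈ ·) h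
      simp at this
    · simp [List.replicate_succ]
    · rintro p ⟨h1, h2, h3, h4, h5, h6⟩
      obtain ⟨hu, hv⟩ := split_take p.1 p.2 _ h6
      have hl : p.1.length + p.2.length = a + 2 := by
        have := congrArg List.length h6; simpa using this
      have l1 : 1 ≤ p.1.length := List.length_pos_iff.mpr h1
      have l2 : 1 ≤ p.2.length := List.length_pos_iff.mpr h2
      have hle : p.1.length ≤ a + 1 := by omega
      rw [take_rep _ _ _ hle] at hu
      have e1 : p.1.length = 1 := (ulam_zeros p.1.length).mp (by rwa [← hu])
      rw [e1] at hu hv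
      rw [drop_rep _ _ _ (by omega)] at hv
      have : a + 1 - 1 = a := by omega
      rw [this] at hv
      exact Prod.ext hu hv

lemma ulam_right : ∀ b : ℕ, IsUlam (true :: List.replicate b false) := by
  intro b
  induction b with
  | zero => simpa using ulam_true
  | succ b IH =>
    rw [isUlam_iff]
    refine Or.inr (Or.inr ⟨(true :: List.replicate b false, [false]), ⟨by simp, by simp,
      IH, ulam_false, by simp, ?_⟩, ?_⟩)
    · show (true :: List.replicate b false) ++ [false] = true :: List.replicate (b+1) false
      rw [List.replicate_succ' (n := b)]; rfl
    · rintro p ⟨h1, h2, h3, h4, h5, h6⟩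
      obtain ⟨hu, hv⟩ := split_take p.1 p.2 _ h6
      have hl : p.1.length + p.2.length = b + 2 := by
        have := congrArg List.length h6; simpa using this
      have l1 : 1 ≤ p.1.length := List.length_pos_iff.mpr h1
      have l2 : 1 ≤ p.2.length := List.length_pos_iff.mpr h2
      -- p.2 = drop i (true :: replicate (b+1) false) = replicate (b + 2 - i) false
      have hw : true :: List.replicate (b+1) false
          = List.replicate 0 false ++ (true :: List.replicate (b+1) false) := by simp
      obtain ⟨i, hi⟩ : ∃ i, p.1.length = 0 + (1 + i) := ⟨p.1.length - 1, by omega⟩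
      rw [hi, hw, drop_rep'] at hv
      have : (true :: List.replicate (b+1) false).drop (1 + i)
          = List.replicate (b + 1 - i) false := by
        rw [Nat.add_comm 1 i]
        show (List.replicate (b+1) false).drop i = _
        rw [List.drop_replicate]
      rw [this] at hv
      have e2 : b + 1 - i = 1 := (ulam_zeros _).mp (by rwa [← hv])
      have hib : i = b := by
        have : p.2.length = b + 1 - i := by rw [hv]; simp
        omega
      rw [hib] at hi
      rw [hi, hw, take_rep'] at hu
      have : (true :: List.replicate (b+1) false).take (1 + b)
          = true :: List.replicate b false := by
        rw [Nat.add_comm 1 b]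
        show true :: (List.replicate (b+1) false).take b = _
        rw [List.take_replicate, Nat.min_eq_left (by omega)]
      rw [this] at hu
      rw [e2] at hv
      refine Prod.ext hu (by simpa using hv)

def W (a b : ℕ) : List Bool := List.replicate a false ++ true :: true :: List.replicate b false

lemma W_length (a b : ℕ) : (W a b).length = a + b + 2 := by simp [W]; omega

lemma split_cases (a b : ℕ) (p : List Bool × List Bool) (h1 : p.1 ≠ []) (h2 : p.2 ≠ [])
    (h6 : p.1 ++ p.2 = W a b) :
    (∃ i, 1 ≤ i ∧ i ≤ a ∧ p.1 = List.replicate i false ∧ p.2 = W (a - i) b) ∨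
    (p.1 = List.replicate a false ++ [true] ∧ p.2 = true :: List.replicate b false) ∨
    (∃ j, 1 ≤ j ∧ j ≤ b ∧ p.1 = W a (b - j) ∧ p.2 = List.replicate j false) := by
  obtain ⟨hu, hv⟩ := split_take p.1 p.2 _ h6
  set i := p.1.length with hidef
  have hl : i + p.2.length = a + b + 2 := by
    have := congrArg List.length h6; rw [W_length] at this; simpa using this
  have l1 : 1 ≤ i := List.length_pos_iff.mpr h1
  have l2 : 1 ≤ p.2.length := List.length_pos_iff.mpr h2
  rcases Nat.lt_trichotomy i (a + 1) with hc | hc | hc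
  · -- i ≤ a
    left
    have hle : i ≤ a := by omega
    refine ⟨i, l1, hle, ?_, ?_⟩
    · rw [hu]; exact take_rep _ _ _ hle
    · rw [hv]; exact drop_rep _ _ _ hle
  · -- i = a + 1
    right; left
    rw [hc] at hu hv
    constructor
    · rw [hu]
      show (W a b).take (a + 1) = _
      rw [W, take_rep']
      rfl
    · rw [hv]
      show (W a b).drop (a + 1) = _
      rw [W, drop_rep']
      rfl
  · -- i ≥ a + 2
    right; right
    have hij : i = a + ((i - a - 2) + 2) := by omega
    have hb : b - (a + b + 2 - i) = i - a - 2 := by omega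
    refine ⟨a + b + 2 - i, by omega, by omega, ?_, ?_⟩
    · rw [hu, hij]
      show (W a b).take _ = _
      rw [W, take_rep']
      show List.replicate a false ++ true :: true :: (List.replicate b false).take (i - a - 2) = _
      rw [List.take_replicate, Nat.min_eq_left (by omega), W]
      have harith : b - (a + b + 2 - (a + (i - a - 2 + 2))) = i - a - 2 := by omega
      rw [harith]
    · rw [hv, hij]
      show (W a b).drop _ = _
      rw [W, drop_rep']
      show (List.replicate b false).drop (i - a - 2) = _
      rw [List.drop_replicate]
      congr 1
      omega

lemma W_ne_single (a b : ℕ) (x : Bool) : W a b ≠ [x] := by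
  intro h
  have := congrArg List.length h
  rw [W_length] at this
  simp at this

lemma false_ne_W (a b : ℕ) : [false] ≠ W a b := by
  intro h
  have := congrArg (true ∈ ·) h
  simp [W] at this

lemma d1 (a b : ℕ) (h : ¬(a = 0 ∧ b = 0)) :
    List.replicate a false ++ [true] ≠ true :: List.replicate b false := by
  rcases a with _ | a
  · intro he
    simp only [List.replicate_zero, List.nil_append] at he
    injection he with h1 h2
    have hb : b = 0 := by
      have := congrArg List.length h2
      simpa using this.symm
    exact h ⟨rfl, hb⟩
  · intro he
    rw [List.replicate_succ, List.cons_append] at he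
    injection he with h1 h2
    exact Bool.noConfusion h1

lemma main_lemma : ∀ n a b : ℕ, a + b ≤ n → (IsUlam (W a b) ↔ Odd (a + b)) := by
  intro n
  induction n with
  | zero =>
    intro a b h
    have ha : a = 0 := by omega
    have hb : b = 0 := by omega
    subst ha; subst hb
    constructor
    · intro hU
      exfalso
      rw [isUlam_iff] at hU
      rcases hU with h' | h' | ⟨q, ⟨h1, h2, h3, h4, h5, h6⟩, _⟩
      · exact W_ne_single 0 0 false h'
      · exact W_ne_single 0 0 true h'
      · rcases split_cases 0 0 q h1 h2 h6 with ⟨i, hi1, hi2, _⟩ | ⟨e1, e2⟩ | ⟨j, hj1, hj2, _⟩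
        · omega
        · exact h5 (by rw [e1, e2]; rfl)
        · omega
    · intro hodd
      exact absurd hodd (by simp)
  | succ n IH =>
    intro a b hab
    rcases Nat.lt_or_ge (a + b) (n + 1) with hlt | hge
    · exact IH a b (by omega)
    have hsum : a + b = n + 1 := by omega
    rcases Nat.even_or_odd (a + b) with heven | hodd
    · -- even case: not Ulam
      refine iff_of_false ?_ (by rwa [← Nat.not_even_iff_odd, not_not] )
      intro hU
      rw [isUlam_iff] at hU
      rcases hU with h' | h' | ⟨q, hq, huniq⟩
      · exact W_ne_single a b false h'
      · exact W_ne_single a b true h'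
      have c1 : (List.replicate a false ++ [true], true :: List.replicate b false).1 ≠ [] ∧
          (List.replicate a false ++ [true], true :: List.replicate b false).2 ≠ [] ∧
          IsUlam (List.replicate a false ++ [true]) ∧ IsUlam (true :: List.replicate b false) ∧
          (List.replicate a false ++ [true]) ≠ (true :: List.replicate b false) ∧
          (List.replicate a false ++ [true]) ++ (true :: List.replicate b false) = W a b := by
        refine ⟨by simp, by simp, ulam_left a, ulam_right b, d1 a b (by omega), by simp [W]⟩
      have e1 := huniq _ c1
      rcases Nat.eq_zero_or_pos a with ha | ha
      · -- a = 0, so b = n+1 ≥ 1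
        subst ha
        have hb : 1 ≤ b := by omega
        have hodd' : Odd (0 + (b - 1)) := by
          obtain ⟨k, hk⟩ := heven
          exact ⟨k - 1, by omega⟩
        have hW : IsUlam (W 0 (b - 1)) := (IH 0 (b - 1) (by omega)).mpr hodd'
        have c2 : (W 0 (b - 1), [false]).1 ≠ [] ∧ (W 0 (b - 1), [false]).2 ≠ [] ∧
            IsUlam (W 0 (b - 1)) ∧ IsUlam [false] ∧
            W 0 (b - 1) ≠ [false] ∧ W 0 (b - 1) ++ [false] = W 0 b := by
          refine ⟨by simp [W], by simp, hW, ulam_false, fun h => false_ne_W _ _ h.symm, ?_⟩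
          show (List.replicate 0 false ++ true :: true :: List.replicate (b-1) false) ++ [false] = _
          simp only [List.replicate_zero, List.nil_append, W]
          have : b = (b - 1) + 1 := by omega
          rw [this, List.replicate_succ' (n := b-1)]
          simp
        have e2 := huniq _ c2
        have : (List.replicate 0 false ++ [true], true :: List.replicate b false) =
            (W 0 (b - 1), [false]) := e1.trans e2.symm
        have h2 := congrArg Prod.snd this
        simp at h2
      · -- a ≥ 1
        have hodd' : Odd ((a - 1) + b) := by
          obtain ⟨k, hk⟩ := heven
          exact ⟨k - 1, by omega⟩
        have hW : IsUlam (W (a - 1) b) := (IH (a - 1) b (by omega)).mpr hodd'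
        have c2 : (([false], W (a - 1) b)).1 ≠ [] ∧ (([false], W (a - 1) b)).2 ≠ [] ∧
            IsUlam [false] ∧ IsUlam (W (a - 1) b) ∧
            [false] ≠ W (a - 1) b ∧ [false] ++ W (a - 1) b = W a b := by
          refine ⟨by simp, by simp [W], ulam_false, hW, false_ne_W _ _, ?_⟩
          show false :: W (a - 1) b = W a b
          rw [W, W]
          have : a = (a - 1) + 1 := by omega
          rw [this, List.replicate_succ]
          simp
        have e2 := huniq _ c2
        have : (List.replicate a false ++ [true], true :: List.replicate b false) =
            ([false], W (a - 1) b) := e1.trans e2.symm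
        have h1' := congrArg Prod.fst this
        simp only [Prod.fst] at h1'
        have := congrArg List.length h1'
        simp at this
        omega
    · -- odd case: Ulam
      refine iff_of_true ?_ hodd
      rw [isUlam_iff]
      right; right
      refine ⟨(List.replicate a false ++ [true], true :: List.replicate b false),
        ⟨by simp, by simp, ulam_left a, ulam_right b, d1 a b (by omega), by simp [W]⟩, ?_⟩
      rintro p ⟨h1, h2, h3, h4, h5, h6⟩
      rcases split_cases a b p h1 h2 h6 with ⟨i, hi1, hi2, e1, e2⟩ | ⟨e1, e2⟩ |
        ⟨j, hj1, hj2, e1, e2⟩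
      · exfalso
        have hi : i = 1 := (ulam_zeros i).mp (by rwa [← e1])
        subst hi
        have hO : Odd ((a - 1) + b) := (IH (a - 1) b (by omega)).mp (by rwa [← e2])
        obtain ⟨k, hk⟩ := hO
        obtain ⟨l, hl⟩ := hodd
        omega
      · exact Prod.ext e1 e2
      · exfalso
        have hj : j = 1 := (ulam_zeros j).mp (by rwa [← e2])
        subst hj
        have hO : Odd (a + (b - 1)) := (IH a (b - 1) (by omega)).mp (by rwa [← e1])
        obtain ⟨k, hk⟩ := hO
        obtain ⟨l, hl⟩ := hodd
        omega


theorem ulam_two_ones (a b : ℕ) :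
    IsUlam (List.replicate a false ++ List.replicate 2 true ++ List.replicate b false) ↔
      Odd (a + b) := by
  have : List.replicate a false ++ List.replicate 2 true ++ List.replicate b false = W a b := by
    simp [W, List.replicate]
  rw [this]
  exact main_lemma (a + b) a b le_rfl
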